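/- Let $n\ge 2$ and $1\le k\le n$ be integers, $h\in\mathbb{R}$, $c>0$, and let $g:(a_1,a_2)\to\mathbb{R}$ be positive, differentiable with $g'(t)\ne 0$ and $(g'(t))^2 = c + g(t)^2\,(h+g(t)^{-n})^2$ for all $t$. Set $\lambda = h+g^{-n}$, $r = g/\sqrt{c}$, fix $t_0\in(a_1,a_2)$ and let $R(t)=\int_{t_0}^t r(\tau)\lambda(\tau)\,d\tau$. Let $e_1=(1,0,\dots,0)\in\mathbb{R}^{n+1}$. Then $(r')^2 - r^2\lambda^2 = 1$ on $(a_1,a_2)$, and for every $y\in\mathbb{R}^{n+1}$ with $y_1=0$ and $\langle y,y\rangle = 1$, the curves $\phi(u) = r(u)\,y + R(u)\,e_1$ and $\nu(u) = -r(u)\lambda(u)\,y - r'(u)\,e_1$ satisfy: $\langle\phi',\phi'\rangle\equiv 1$, $\langle\nu,\nu\rangle\equiv -1$, $\langle\nu,\phi'\rangle\equiv 0$, $\langle\nu(u),v\rangle = 0$ for every $v\in\mathbb{R}^{n+1}$ with $v_1=0$ and $\langle v,y\rangle = 0$, and $\nu'(u) = -(nh-(n-1)\lambda(u))\,\phi'(u)$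 for all $u$. -/

import Mathlib

/-- The semi-riemannian bilinear form of index `k` on `ℝ^m`:
`⟨v,w⟩ = -v₁w₁ - ⋯ - v_k w_k + v_{k+1} w_{k+1} + ⋯ + v_m w_m`
(coordinates are 0-indexed in Lean, so the first `k` indices carry sign `-1`). -/
noncomputable def semiForm (k : ℕ) {m : ℕ} (v w : Fin m → ℝ) : ℝ :=
  ∑ i : Fin m, (if (i : ℕ) < k then (-1 : ℝ) else 1) * v i * w i

private lemma semiForm_expand {m : ℕ} (k : ℕ) (y e : Fin m → ℝ) (a b c d : ℝ) :
    semiForm k (fun i => a * y i + b * e i) (fun i => c * y i + d * e i)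
      = a * c * semiForm k y y + (a * d + b * c) * semiForm k y e
        + b * d * semiForm k e e := by
  simp only [semiForm, Finset.mul_sum, ← Finset.sum_add_distrib]
  exact Finset.sum_congr rfl fun i _ => by ring

private lemma semiForm_expand_left {m : ℕ} (k : ℕ) (y e v : Fin m → ℝ) (a b : ℝ) :
    semiForm k (fun i => a * y i + b * e i) v
      = a * semiForm k y v + b * semiForm k e v := by
  simp only [semiForm, Finset.mul_sum, ← Finset.sum_add_distrib]
  exact Finset.sum_congr rfl fun i _ => by ring

private lemma semiForm_comm {m : ℕ} (k : ℕ) (v w : Fin m → ℝ) :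
    semiForm k v w = semiForm k w v :=
  Finset.sum_congr rfl fun i _ => by ring

/-- Theorem 2.22 of the paper (a family of cmc hypersurfaces of `ℝ_k^{n+1}`).
Coordinate `1` of the paper (1-indexed) is index `0` here. -/
theorem stmt_9 (n k : ℕ) (hn : 2 ≤ n) (hk1 : 1 ≤ k) (hkn : k ≤ n)
    (h c a₁ a₂ t₀ : ℝ) (hc : 0 < c) (ht₀ : t₀ ∈ Set.Ioo a₁ a₂)
    (g lam r R : ℝ → ℝ)
    (hgdiff : ∀ t ∈ Set.Ioo a₁ a₂, DifferentiableAt ℝ g t)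
    (hgpos : ∀ t ∈ Set.Ioo a₁ a₂, 0 < g t)
    (hg' : ∀ t ∈ Set.Ioo a₁ a₂, deriv g t ≠ 0)
    (hode : ∀ t ∈ Set.Ioo a₁ a₂,
      deriv g t ^ 2 = c + g t ^ 2 * (h + g t ^ (-(n : ℤ))) ^ 2)
    (hlam : ∀ t, lam t = h + g t ^ (-(n : ℤ)))
    (hr : ∀ t, r t = g t / Real.sqrt c)
    (hR : ∀ t, R t = ∫ τ in t₀..t, r τ * lam τ)
    (e : Fin (n + 1) → ℝ)
    (he : ∀ i, e i = if (i : ℕ) = 0 then 1 else 0) :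
    (∀ t ∈ Set.Ioo a₁ a₂, deriv r t ^ 2 - r t ^ 2 * lam t ^ 2 = 1) ∧
    ∀ y : Fin (n + 1) → ℝ,
      (∀ i : Fin (n + 1), (i : ℕ) = 0 → y i = 0) →
      semiForm k y y = 1 →
      ∀ φ ν : ℝ → Fin (n + 1) → ℝ,
        (∀ u, φ u = r u • y + R u • e) →
        (∀ u, ν u = (-(r u * lam u)) • y - deriv r u • e) →
        ∀ u ∈ Set.Ioo a₁ a₂,
          semiForm k (deriv φ u) (deriv φ u) = 1 ∧
          semiForm k (ν u) (ν u) = -1 ∧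
          semiForm k (ν u) (deriv φ u) = 0 ∧
          (∀ v : Fin (n + 1) → ℝ,
            (∀ i : Fin (n + 1), (i : ℕ) = 0 → v i = 0) →
            semiForm k v y = 0 → semiForm k (ν u) v = 0) ∧
          deriv ν u = (-((n : ℝ) * h - ((n : ℝ) - 1) * lam u)) • deriv φ u := by
  have hsc : (0:ℝ) < Real.sqrt c := Real.sqrt_pos.mpr hc
  have hcs : Real.sqrt c ^ 2 = c := Real.sq_sqrt hc.le
  have hIo : IsOpen (Set.Ioo a₁ a₂) := isOpen_Ioo
  have hrfun : r = fun t => g t / Real.sqrt c := funext hr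
  -- derivative of r
  have hrd : ∀ t ∈ Set.Ioo a₁ a₂, HasDerivAt r (deriv g t / Real.sqrt c) t := by
    intro t ht
    rw [hrfun]
    exact ((hgdiff t ht).hasDerivAt).div_const _
  have hdr : ∀ t ∈ Set.Ioo a₁ a₂, deriv r t = deriv g t / Real.sqrt c :=
    fun t ht => (hrd t ht).deriv
  -- square identity
  have hFsq : ∀ t ∈ Set.Ioo a₁ a₂, deriv r t ^ 2 = 1 + (r t * lam t) ^ 2 := by
    intro t ht
    have h1 : deriv r t ^ 2 = (c + g t ^ 2 * lam t ^ 2) / c := by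
      rw [hdr t ht, div_pow, hcs, hode t ht, hlam t]
    have h2 : (r t * lam t) ^ 2 = g t ^ 2 * lam t ^ 2 / c := by
      rw [hr t, div_mul_eq_mul_div, div_pow, hcs, mul_pow]
    rw [h1, h2]
    field_simp
  -- derivative of F = r * lam
  have hFd : ∀ t ∈ Set.Ioo a₁ a₂,
      HasDerivAt (fun τ => r τ * lam τ)
        (((n:ℝ) * h - ((n:ℝ) - 1) * lam t) * deriv r t) t := by
    intro t ht
    have hx : g t ≠ 0 := (hgpos t ht).ne'
    have hgd : HasDerivAt g (deriv g t) t := (hgdiff t ht).hasDerivAt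
    have hz : HasDerivAt (fun τ => g τ ^ (-(n:ℤ)))
        (((-(n:ℤ)) : ℝ) * g t ^ (-(n:ℤ) - 1) * deriv g t) t := by
      have := (hasDerivAt_zpow (-(n:ℤ)) (g t) (Or.inl hx)).comp t hgd
      simpa [mul_assoc, Function.comp_def] using this
    have hlamd : HasDerivAt lam (((-(n:ℤ)) : ℝ) * g t ^ (-(n:ℤ) - 1) * deriv g t) t := by
      have hlamfun : lam = fun τ => h + g τ ^ (-(n:ℤ)) := funext hlam
      rw [hlamfun]
      exact hz.const_add h
    have hrd' : HasDerivAt r (deriv r t) t := by rw [hdr t ht]; exact hrd t ht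
    have hmul := hrd'.mul hlamd
    have hxx : g t ^ (-(n:ℤ) - 1) * g t = g t ^ (-(n:ℤ)) := by
      rw [← zpow_add_one₀ hx]
      congr 1
      ring
    have hval : deriv r t * lam t + r t * (((-(n:ℤ)) : ℝ) * g t ^ (-(n:ℤ) - 1) * deriv g t)
        = ((n:ℝ) * h - ((n:ℝ) - 1) * lam t) * deriv r t := by
      rw [hlam t, hr t, hdr t ht]
      push_cast
      linear_combination (-(n:ℝ) * deriv g t / Real.sqrt c) * hxx
    exact hval ▸ hmul
  -- sign of deriv r is constant: deriv r t = ε * sqrt (1 + F t ^ 2)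
  have htri := hasDerivWithinAt_forall_lt_or_forall_gt_of_forall_ne (convex_Ioo a₁ a₂)
    (fun x hx => ((hgdiff x hx).hasDerivAt).hasDerivWithinAt) (m := 0) hg'
  obtain ⟨ε, hε1, hre⟩ : ∃ ε : ℝ, ε ^ 2 = 1 ∧
      ∀ t ∈ Set.Ioo a₁ a₂, deriv r t = ε * Real.sqrt (1 + (r t * lam t) ^ 2) := by
    have habs : ∀ t ∈ Set.Ioo a₁ a₂,
        |deriv r t| = Real.sqrt (1 + (r t * lam t) ^ 2) := by
      intro t ht
      rw [← Real.sqrt_sq_eq_abs, hFsq t ht]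
    rcases htri with hneg | hpos
    · refine ⟨-1, by norm_num, fun t ht => ?_⟩
      have hlt : deriv r t < 0 := by
        rw [hdr t ht]; exact div_neg_of_neg_of_pos (hneg t ht) hsc
      have := habs t ht
      rw [abs_of_neg hlt] at this
      linarith
    · refine ⟨1, by norm_num, fun t ht => ?_⟩
      have hlt : 0 < deriv r t := by
        rw [hdr t ht]; exact div_pos (hpos t ht) hsc
      have := habs t ht
      rw [abs_of_pos hlt] at this
      linarith
  -- second derivative of r
  have hr'd : ∀ u ∈ Set.Ioo a₁ a₂,
      HasDerivAt (deriv r)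
        (r u * lam u * ((n:ℝ) * h - ((n:ℝ) - 1) * lam u)) u := by
    intro u hu
    have hSpos : (0:ℝ) < Real.sqrt (1 + (r u * lam u) ^ 2) :=
      Real.sqrt_pos.mpr (by positivity)
    have hinner : HasDerivAt (fun τ => 1 + (r τ * lam τ) ^ 2)
        (2 * (r u * lam u) * (((n:ℝ) * h - ((n:ℝ) - 1) * lam u) * deriv r u)) u := by
      have := ((hFd u hu).pow 2).const_add 1
      simpa [mul_comm, mul_assoc, mul_left_comm] using this
    have hS := (hinner.sqrt (by positivity)).const_mul ε
    have heq : deriv r =ᶠ[nhds u] fun t => ε * Real.sqrt (1 + (r t * lam t) ^ 2) := by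
      filter_upwards [hIo.mem_nhds hu] with t ht using hre t ht
    have hval : ε * (2 * (r u * lam u) * (((n:ℝ) * h - ((n:ℝ) - 1) * lam u) * deriv r u)
          / (2 * Real.sqrt (1 + (r u * lam u) ^ 2)))
        = r u * lam u * ((n:ℝ) * h - ((n:ℝ) - 1) * lam u) := by
      rw [hre u hu]
      field_simp
      linear_combination (r u * lam u * ((n:ℝ) * h - ((n:ℝ) - 1) * lam u)) * hε1
    have := hval ▸ hS
    exact this.congr_of_eventuallyEq heq
  -- derivative of R
  have hRd : ∀ u ∈ Set.Ioo a₁ a₂, HasDerivAt R (r u * lam u) u := by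
    intro u hu
    have hRfun : R = fun t => ∫ τ in t₀..t, r τ * lam τ := funext hR
    have hFcont : ContinuousOn (fun τ => r τ * lam τ) (Set.Ioo a₁ a₂) :=
      fun t ht => (hFd t ht).continuousAt.continuousWithinAt
    have hsub : Set.uIcc t₀ u ⊆ Set.Ioo a₁ a₂ :=
      Set.ordConnected_Ioo.uIcc_subset ht₀ hu
    have hint : IntervalIntegrable (fun τ => r τ * lam τ) MeasureTheory.volume t₀ u :=
      (hFcont.mono hsub).intervalIntegrable
    have hmeas := hFcont.stronglyMeasurableAtFilter (μ := MeasureTheory.volume) hIo u hu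
    rw [hRfun]
    exact intervalIntegral.integral_hasDerivAt_right hint hmeas (hFd u hu).continuousAt
  constructor
  · intro t ht
    have := hFsq t ht
    nlinarith [this]
  · intro y hy hyy φ ν hφ hν u hu
    -- basic form values
    have hye : semiForm k y e = 0 := by
      apply Finset.sum_eq_zero
      intro i _
      by_cases h0 : (i : ℕ) = 0
      · rw [hy i h0]; ring
      · rw [he i]; simp [h0]
    have hey : semiForm k e y = 0 := (semiForm_comm k e y).trans hye
    have hee : semiForm k e e = -1 := by
      rw [semiForm]
      rw [Finset.sum_eq_single_of_mem (0 : Fin (n+1)) (Finset.mem_univ _)]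
      · have h0k : (0:ℕ) < k := hk1
        simp [he, h0k]
      · intro i _ hi
        have : (i : ℕ) ≠ 0 := by
          intro hh
          exact hi (Fin.ext (by simp [hh]))
        simp [he, this]
    -- derivatives of φ and ν
    have hrdu : HasDerivAt r (deriv r u) u := by rw [hdr u hu]; exact hrd u hu
    have hφd : HasDerivAt φ (fun i => deriv r u * y i + (r u * lam u) * e i) u := by
      have hφfun : φ = fun t => fun i => r t * y i + R t * e i := by
        funext t i
        rw [hφ t]
        simp
      rw [hφfun]
      exact hasDerivAt_pi.mpr fun i =>
        (hrdu.mul_const (y i)).add ((hRd u hu).mul_const (e i))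
    have hDφ : deriv φ u = fun i => deriv r u * y i + (r u * lam u) * e i := hφd.deriv
    have hνu : ν u = fun i => (-(r u * lam u)) * y i + (-(deriv r u)) * e i := by
      rw [hν u]
      funext i
      simp [sub_eq_add_neg]
    have hνd : HasDerivAt ν
        (fun i => (-(((n:ℝ) * h - ((n:ℝ) - 1) * lam u) * deriv r u)) * y i
          + (-(r u * lam u * ((n:ℝ) * h - ((n:ℝ) - 1) * lam u))) * e i) u := by
      have hνfun : ν = fun t => fun i => (-(r t * lam t)) * y i + (-(deriv r t)) * e i := by
        funext t i
        rw [hν t]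
        simp [sub_eq_add_neg]
      rw [hνfun]
      refine hasDerivAt_pi.mpr fun i => ?_
      exact (((hFd u hu).neg).mul_const (y i)).add (((hr'd u hu).neg).mul_const (e i))
    have hsq := hFsq u hu
    refine ⟨?_, ?_, ?_, ?_, ?_⟩
    · rw [hDφ, semiForm_expand k y e, hyy, hye, hee]
      linear_combination hsq
    · rw [hνu, semiForm_expand k y e, hyy, hye, hee]
      linear_combination (-1 : ℝ) * hsq
    · rw [hνu, hDφ, semiForm_expand k y e, hyy, hye, hee]
      ring
    · intro v hv hvy
      have hyv : semiForm k y v = 0 := (semiForm_comm k y v).trans hvy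
      have hev : semiForm k e v = 0 := by
        apply Finset.sum_eq_zero
        intro i _
        by_cases h0 : (i : ℕ) = 0
        · rw [hv i h0]; ring
        · rw [he i]; simp [h0]
      rw [hνu, semiForm_expand_left k y e v, hyv, hev]
      ring
    · rw [hνd.deriv, hDφ]
      funext i
      simp only [Pi.smul_apply, smul_eq_mul]
      ring
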